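/- arXiv:1104.3386 — 7 statements merged into one kernel-verified Lean document; each statement's English description precedes it below -/
import Mathlib

section
/- Let (u₁, u₂, u₃, u₄) and (v₁, v₂, v₃, v₄) be two orthonormal bases of ℝ⁴ (with its standard inner product) such that det(u₁,u₂,u₃,u₄) > 0 and det(v₁,v₂,v₃,v₄) > 0 (positive orthonormal frames). Then det(u₁, u₂, v₁, v₂) = det(u₃, u₄, v₃, v₄). -/
/-- The determinant of the 4×4 real matrix whose columns are `w1, w2, w3, w4`. -/
noncomputable def det4 (w1 w2 w3 w4 : Fin 4 → ℝ) : ℝ :=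
  Matrix.det (Matrix.of fun i j => ![w1, w2, w3, w4] j i)

private lemma det4_expand (w1 w2 w3 w4 : Fin 4 → ℝ) :
    det4 w1 w2 w3 w4 =
      w1 0 * w2 1 * w3 2 * w4 3
      - w1 0 * w2 1 * w3 3 * w4 2
      - w1 0 * w2 2 * w3 1 * w4 3
      + w1 0 * w2 2 * w3 3 * w4 1
      + w1 0 * w2 3 * w3 1 * w4 2
      - w1 0 * w2 3 * w3 2 * w4 1
      - w1 1 * w2 0 * w3 2 * w4 3
      + w1 1 * w2 0 * w3 3 * w4 2
      + w1 1 * w2 2 * w3 0 * w4 3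
      - w1 1 * w2 2 * w3 3 * w4 0
      - w1 1 * w2 3 * w3 0 * w4 2
      + w1 1 * w2 3 * w3 2 * w4 0
      + w1 2 * w2 0 * w3 1 * w4 3
      - w1 2 * w2 0 * w3 3 * w4 1
      - w1 2 * w2 1 * w3 0 * w4 3
      + w1 2 * w2 1 * w3 3 * w4 0
      + w1 2 * w2 3 * w3 0 * w4 1
      - w1 2 * w2 3 * w3 1 * w4 0
      - w1 3 * w2 0 * w3 1 * w4 2
      + w1 3 * w2 0 * w3 2 * w4 1
      + w1 3 * w2 1 * w3 0 * w4 2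
      - w1 3 * w2 1 * w3 2 * w4 0
      - w1 3 * w2 2 * w3 0 * w4 1
      + w1 3 * w2 2 * w3 1 * w4 0 := by
  rw [det4, Matrix.det_succ_row_zero]
  simp [Fin.sum_univ_succ, Matrix.det_fin_three, Fin.succAbove]
  ring

open Matrix in
private lemma det4_eq_one (a b c d : Fin 4 → ℝ)
    (h : ∀ i j : Fin 4,
      dotProduct (![a, b, c, d] i) (![a, b, c, d] j)
        = if i = j then 1 else 0)
    (hpos : 0 < det4 a b c d) : det4 a b c d = 1 := by
  have horth : (Matrix.of fun i j => ![a, b, c, d] j i)ᵀ *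
      (Matrix.of fun i j => ![a, b, c, d] j i) = 1 := by
    ext i j
    have := h i j
    simp [Matrix.mul_apply, dotProduct, Matrix.one_apply] at this ⊢
    convert this using 2
  have hdet2 : det4 a b c d * det4 a b c d = 1 := by
    have := congrArg Matrix.det horth
    rwa [Matrix.det_mul, Matrix.det_transpose, Matrix.det_one] at this
  nlinarith [hdet2, hpos]

private lemma six_sq {x y z w s t : ℝ}
    (h : x^2 + y^2 + z^2 + w^2 + s^2 + t^2 = 0) :
    x = 0 ∧ y = 0 ∧ z = 0 ∧ w = 0 ∧ s = 0 ∧ t = 0 := by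
  have hx := sq_nonneg x
  have hy := sq_nonneg y
  have hz := sq_nonneg z
  have hw := sq_nonneg w
  have hs := sq_nonneg s
  have ht := sq_nonneg t
  refine ⟨?_, ?_, ?_, ?_, ?_, ?_⟩ <;>
  · rw [← sq_eq_zero_iff]
    linarith

/-- For a positive orthonormal frame `(a,b,c,d)` of `ℝ⁴`, the 2×2 minors of `(c,d)`
are the complementary 2×2 minors of `(a,b)` (i.e. `c ∧ d = ⋆(a ∧ b)`). -/
private lemma star_minors (a b c d : Fin 4 → ℝ)
    (h : ∀ i j : Fin 4,
      dotProduct (![a, b, c, d] i) (![a, b, c, d] j)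
        = if i = j then 1 else 0)
    (hpos : 0 < det4 a b c d) :
    (c 0 * d 1 - c 1 * d 0 = a 2 * b 3 - a 3 * b 2) ∧
    (c 0 * d 2 - c 2 * d 0 = -(a 1 * b 3 - a 3 * b 1)) ∧
    (c 0 * d 3 - c 3 * d 0 = a 1 * b 2 - a 2 * b 1) ∧
    (c 1 * d 2 - c 2 * d 1 = a 0 * b 3 - a 3 * b 0) ∧
    (c 1 * d 3 - c 3 * d 1 = -(a 0 * b 2 - a 2 * b 0)) ∧
    (c 2 * d 3 - c 3 * d 2 = a 0 * b 1 - a 1 * b 0) := by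
  have hdet := det4_eq_one a b c d h hpos
  have haa := h 0 0
  have hbb := h 1 1
  have hcc := h 2 2
  have hdd := h 3 3
  have hab := h 0 1
  have hcd := h 2 3
  simp [dotProduct, Fin.sum_univ_four] at haa hbb hcc hdd hab hcd
  rw [det4_expand] at hdet
  have key :
      ((a 0 * b 1 - a 1 * b 0) - (c 2 * d 3 - c 3 * d 2))^2 +
      ((a 0 * b 2 - a 2 * b 0) + (c 1 * d 3 - c 3 * d 1))^2 +
      ((a 0 * b 3 - a 3 * b 0) - (c 1 * d 2 - c 2 * d 1))^2 +
      ((a 1 * b 2 - a 2 * b 1) - (c 0 * d 3 - c 3 * d 0))^2 +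
      ((a 1 * b 3 - a 3 * b 1) + (c 0 * d 2 - c 2 * d 0))^2 +
      ((a 2 * b 3 - a 3 * b 2) - (c 0 * d 1 - c 1 * d 0))^2 = 0 := by
    linear_combination (b 0 ^ 2 + b 1 ^ 2 + b 2 ^ 2 + b 3 ^ 2) * haa + hbb
      - (a 0 * b 0 + a 1 * b 1 + a 2 * b 2 + a 3 * b 3) * hab
      + (d 0 ^ 2 + d 1 ^ 2 + d 2 ^ 2 + d 3 ^ 2) * hcc + hdd
      - (c 0 * d 0 + c 1 * d 1 + c 2 * d 2 + c 3 * d 3) * hcd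
      - 2 * hdet
  obtain ⟨h1, h2, h3, h4, h5, h6⟩ := six_sq key
  exact ⟨by linarith, by linarith, by linarith, by linarith, by linarith, by linarith⟩

/-- If `(u₁,u₂,u₃,u₄)` and `(v₁,v₂,v₃,v₄)` are positive orthonormal frames of ℝ⁴
(with the standard inner product, i.e. the dot product), then
`det(u₁,u₂,v₁,v₂) = det(u₃,u₄,v₃,v₄)`. -/
theorem det4_of_positive_orthonormal_frames
    (u1 u2 u3 u4 v1 v2 v3 v4 : Fin 4 → ℝ)
    (hu : ∀ i j : Fin 4,
      dotProduct (![u1, u2, u3, u4] i) (![u1, u2, u3, u4] j)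
        = if i = j then 1 else 0)
    (hv : ∀ i j : Fin 4,
      dotProduct (![v1, v2, v3, v4] i) (![v1, v2, v3, v4] j)
        = if i = j then 1 else 0)
    (hupos : 0 < det4 u1 u2 u3 u4)
    (hvpos : 0 < det4 v1 v2 v3 v4) :
    det4 u1 u2 v1 v2 = det4 u3 u4 v3 v4 := by
  obtain ⟨hUa, hUb, hUc, hUd, hUe, hUf⟩ := star_minors u1 u2 u3 u4 hu hupos
  obtain ⟨hVa, hVb, hVc, hVd, hVe, hVf⟩ := star_minors v1 v2 v3 v4 hv hvpos
  rw [det4_expand, det4_expand]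
  linear_combination
    (-(v3 2 * v4 3 - v3 3 * v4 2)) * hUa
    + (v3 1 * v4 3 - v3 3 * v4 1) * hUb
    + (-(v3 1 * v4 2 - v3 2 * v4 1)) * hUc
    + (-(v3 0 * v4 3 - v3 3 * v4 0)) * hUd
    + (v3 0 * v4 2 - v3 2 * v4 0) * hUe
    + (-(v3 0 * v4 1 - v3 1 * v4 0)) * hUf
    + (-(u1 0 * u2 1 - u1 1 * u2 0)) * hVa
    + (-(u1 0 * u2 2 - u1 2 * u2 0)) * hVb
    + (-(u1 0 * u2 3 - u1 3 * u2 0)) * hVc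
    + (-(u1 1 * u2 2 - u1 2 * u2 1)) * hVd
    + (-(u1 1 * u2 3 - u1 3 * u2 1)) * hVe
    + (-(u1 2 * u2 3 - u1 3 * u2 2)) * hVf
end

section
/- Let a₁, a₂, b₁, b₂ ∈ ℝ⁴ be such that (a₁, a₂, b₁, b₂) is linearly independent. Let (u₁, u₂) be a basis of the orthogonal complement of span{a₁, a₂} with det(u₁, u₂, a₁, a₂) > 0, and let (v₁, v₂) be a basis of the orthogonal complement of span{b₁, b₂} with det(v₁, v₂, b₁, b₂) > 0. Then det(u₁, u₂, v₁, v₂) · det(a₁, a₂, b₁, b₂) > 0; in particular det(u₁, u₂, v₁, v₂) and det(a₁, a₂, b₁, b₂) have the same sign. (This is the linear-algebraic content of Theorem 1: at a transverse intersection point P of two mixed curves C: f = 0 and C': g = 0, taking a₁ = grad f_ℝ(P), a₂ = grad f_I(P), b₁ = grad g_ℝ(P), b₂ = grad g_I(P), the local topological intersection number I_top(C,C';P), computed from positively oriented tangent frames (u₁,u₂) of C and (v₁,v₂) of C', equals Sign(grad f_ℝ(P), grad f_I(P), grad g_ℝ(P), grad g_I(P)).) -/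
set_option maxHeartbeats 1000000


private lemma det_fin_four' (M : Matrix (Fin 4) (Fin 4) ℝ) :
    M.det =
      M 0 0 * (M 1 1 * (M 2 2 * M 3 3 - M 2 3 * M 3 2) - M 1 2 * (M 2 1 * M 3 3 - M 2 3 * M 3 1)
        + M 1 3 * (M 2 1 * M 3 2 - M 2 2 * M 3 1))
      - M 0 1 * (M 1 0 * (M 2 2 * M 3 3 - M 2 3 * M 3 2) - M 1 2 * (M 2 0 * M 3 3 - M 2 3 * M 3 0)
        + M 1 3 * (M 2 0 * M 3 2 - M 2 2 * M 3 0))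
      + M 0 2 * (M 1 0 * (M 2 1 * M 3 3 - M 2 3 * M 3 1) - M 1 1 * (M 2 0 * M 3 3 - M 2 3 * M 3 0)
        + M 1 3 * (M 2 0 * M 3 1 - M 2 1 * M 3 0))
      - M 0 3 * (M 1 0 * (M 2 1 * M 3 2 - M 2 2 * M 3 1) - M 1 1 * (M 2 0 * M 3 2 - M 2 2 * M 3 0)
        + M 1 2 * (M 2 0 * M 3 1 - M 2 1 * M 3 0)) := by
  rw [Matrix.det_succ_row_zero, Fin.sum_univ_four]
  norm_num [Matrix.det_fin_three, Matrix.submatrix_apply, Fin.succAbove, Fin.lt_def,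
    show (Fin.succ 2 : Fin 4) = 3 from rfl, show ((3 : Fin 4) : ℕ) = 3 from rfl,
    show (Fin.castSucc 2 : Fin 4) = 2 from rfl, show (Fin.succ 1 : Fin 4) = 2 from rfl]
  ring

private lemma det4_mul (p1 p2 p3 p4 q1 q2 q3 q4 : Fin 4 → ℝ) :
    det4 p1 p2 p3 p4 * det4 q1 q2 q3 q4 =
    Matrix.det (Matrix.of fun i j =>
      dotProduct (![p1, p2, p3, p4] i) (![q1, q2, q3, q4] j)) := by
  unfold det4
  rw [← Matrix.det_transpose (Matrix.of fun i j => ![p1, p2, p3, p4] j i), ← Matrix.det_mul]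
  congr 1

private lemma det4_swap (w1 w2 w3 w4 : Fin 4 → ℝ) : det4 w3 w4 w1 w2 = det4 w1 w2 w3 w4 := by
  unfold det4
  rw [det_fin_four', det_fin_four']
  simp only [Matrix.of_apply]
  simp [Matrix.vecHead, Matrix.vecTail, Matrix.cons_val']
  ring

private lemma det4_mul_expand (p1 p2 p3 p4 q1 q2 q3 q4 : Fin 4 → ℝ) :
    det4 p1 p2 p3 p4 * det4 q1 q2 q3 q4 =
      dotProduct p1 q1 * (dotProduct p2 q2 * (dotProduct p3 q3 * dotProduct p4 q4 - dotProduct p3 q4 * dotProduct p4 q3) - dotProduct p2 q3 * (dotProduct p3 q2 * dotProduct p4 q4 - dotProduct p3 q4 * dotProduct p4 q2) + dotProduct p2 q4 * (dotProduct p3 q2 * dotProduct p4 q3 - dotProduct p3 q3 * dotProduct p4 q2)) - dotProduct p1 q2 * (dotProduct p2 q1 * (dotProduct p3 q3 * dotProduct p4 q4 - dotProduct p3 q4 * dotProduct p4 q3) - dotProduct p2 q3 * (dotProduct p3 q1 * dotProduct p4 q4 - dotProduct p3 q4 * dotProduct p4 q1) + dotProduct p2 q4 * (dotProduct p3 q1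 * dotProduct p4 q3 - dotProduct p3 q3 * dotProduct p4 q1)) + dotProduct p1 q3 * (dotProduct p2 q1 * (dotProduct p3 q2 * dotProduct p4 q4 - dotProduct p3 q4 * dotProduct p4 q2) - dotProduct p2 q2 * (dotProduct p3 q1 * dotProduct p4 q4 - dotProduct p3 q4 * dotProduct p4 q1) + dotProduct p2 q4 * (dotProduct p3 q1 * dotProduct p4 q2 - dotProduct p3 q2 * dotProduct p4 q1)) - dotProduct p1 q4 * (dotProduct p2 q1 * (dotProduct p3 q2 * dotProduct p4 q3 - dotProduct p3 q3 * dotProduct p4 q2) - dotProduct p2 q2 * (dotProduct p3 q1 * dotProduct p4 q3 - dotProduct p3 q3 * dotProduct p4 q1) + dotProduct p2 q3 * (dotProduct p3 q1 * dotProduct p4 q2 - dotProduct p3 q2 * dotProduct p4 q1)) := by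
  rw [det4_mul, det_fin_four']
  rfl

private lemma cs (p q : Fin 4 → ℝ) :
    dotProduct p q * dotProduct p q ≤
      dotProduct p p * dotProduct q q := by
  have h := Finset.sum_mul_sq_le_sq_mul_sq Finset.univ p q
  simpa [dotProduct, pow_two] using h

/-- Theorem 1 (linear-algebraic content): let `a₁,a₂,b₁,b₂` be linearly independent
vectors of ℝ⁴ (with the standard dot product).  If `(u₁,u₂)` is a basis of the
orthogonal complement of `span{a₁,a₂}` with `det(u₁,u₂,a₁,a₂) > 0`, and `(v₁,v₂)`
is a basis of the orthogonal complement of `span{b₁,b₂}` with `det(v₁,v₂,b₁,b₂) > 0`,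
then `det(u₁,u₂,v₁,v₂) · det(a₁,a₂,b₁,b₂) > 0`.

Here "basis of the orthogonal complement of `span{a₁,a₂}`" is expressed (equivalently,
since `a₁,a₂` are linearly independent so the complement is 2-dimensional) by:
`u₁,u₂` are linearly independent and each is orthogonal to both `a₁` and `a₂`. -/
theorem sign_det_tangent_frames_eq_sign_det_gradients
    (a1 a2 b1 b2 u1 u2 v1 v2 : Fin 4 → ℝ)
    (hab : LinearIndependent ℝ ![a1, a2, b1, b2])
    (hu_indep : LinearIndependent ℝ ![u1, u2])
    (hu1a1 : dotProduct u1 a1 = 0) (hu1a2 : dotProduct u1 a2 = 0)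
    (hu2a1 : dotProduct u2 a1 = 0) (hu2a2 : dotProduct u2 a2 = 0)
    (hu_pos : 0 < det4 u1 u2 a1 a2)
    (hv_indep : LinearIndependent ℝ ![v1, v2])
    (hv1b1 : dotProduct v1 b1 = 0) (hv1b2 : dotProduct v1 b2 = 0)
    (hv2b1 : dotProduct v2 b1 = 0) (hv2b2 : dotProduct v2 b2 = 0)
    (hv_pos : 0 < det4 v1 v2 b1 b2) :
    0 < det4 u1 u2 v1 v2 * det4 a1 a2 b1 b2 := by
  have ha1u1 : dotProduct a1 u1 = 0 := by rw [dotProduct_comm]; exact hu1a1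
  have ha1u2 : dotProduct a1 u2 = 0 := by rw [dotProduct_comm]; exact hu2a1
  have ha2u1 : dotProduct a2 u1 = 0 := by rw [dotProduct_comm]; exact hu1a2
  have ha2u2 : dotProduct a2 u2 = 0 := by rw [dotProduct_comm]; exact hu2a2
  have hb1v1 : dotProduct b1 v1 = 0 := by rw [dotProduct_comm]; exact hv1b1
  have hb1v2 : dotProduct b1 v2 = 0 := by rw [dotProduct_comm]; exact hv2b1
  have hb2v1 : dotProduct b2 v1 = 0 := by rw [dotProduct_comm]; exact hv1b2
  have hb2v2 : dotProduct b2 v2 = 0 := by rw [dotProduct_comm]; exact hv2b2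
  set Gu : ℝ := dotProduct u1 u1 * dotProduct u2 u2
    - dotProduct u1 u2 * dotProduct u2 u1 with hGu_def
  set Gv : ℝ := dotProduct v1 v1 * dotProduct v2 v2
    - dotProduct v1 v2 * dotProduct v2 v1 with hGv_def
  set Ga : ℝ := dotProduct a1 a1 * dotProduct a2 a2
    - dotProduct a1 a2 * dotProduct a2 a1 with hGa_def
  set Gb : ℝ := dotProduct b1 b1 * dotProduct b2 b2
    - dotProduct b1 b2 * dotProduct b2 b1 with hGb_def
  set P : ℝ := dotProduct u1 b1 * dotProduct u2 b2
    - dotProduct u1 b2 * dotProduct u2 b1 with hP_def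
  set Q : ℝ := dotProduct v1 a1 * dotProduct v2 a2
    - dotProduct v1 a2 * dotProduct v2 a1 with hQ_def
  -- identity (1): x² = Gu * Ga
  have h1 : det4 u1 u2 a1 a2 * det4 u1 u2 a1 a2 = Gu * Ga := by
    have h := det4_mul_expand u1 u2 a1 a2 u1 u2 a1 a2
    rw [hu1a1, hu1a2, hu2a1, hu2a2, ha1u1, ha1u2, ha2u1, ha2u2] at h
    rw [h, hGu_def, hGa_def]; ring
  -- identity (2): y² = Gv * Gb
  have h2 : det4 v1 v2 b1 b2 * det4 v1 v2 b1 b2 = Gv * Gb := by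
    have h := det4_mul_expand v1 v2 b1 b2 v1 v2 b1 b2
    rw [hv1b1, hv1b2, hv2b1, hv2b2, hb1v1, hb1v2, hb2v1, hb2v2] at h
    rw [h, hGv_def, hGb_def]; ring
  -- identity (3): x * D = Ga * P
  have h3 : det4 u1 u2 a1 a2 * det4 a1 a2 b1 b2 = Ga * P := by
    have h := det4_mul_expand a1 a2 u1 u2 a1 a2 b1 b2
    rw [det4_swap u1 u2 a1 a2] at h
    rw [hu1a1, hu1a2, hu2a1, hu2a2] at h
    rw [h, hGa_def, hP_def]; ring
  -- identity (4): y * D = Gb * Q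
  have h4 : det4 v1 v2 b1 b2 * det4 a1 a2 b1 b2 = Gb * Q := by
    have h := det4_mul_expand b1 b2 v1 v2 b1 b2 a1 a2
    rw [det4_swap v1 v2 b1 b2, det4_swap a1 a2 b1 b2] at h
    rw [hv1b1, hv1b2, hv2b1, hv2b2] at h
    rw [h, hGb_def, hQ_def]; ring
  -- identity (5): d * D = P * Q
  have h5 : det4 u1 u2 v1 v2 * det4 a1 a2 b1 b2 = P * Q := by
    have h := det4_mul_expand u1 u2 v1 v2 a1 a2 b1 b2
    rw [hu1a1, hu1a2, hu2a1, hu2a2, hv1b1, hv1b2, hv2b1, hv2b2] at h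
    rw [h, hP_def, hQ_def]; ring
  -- Gram determinants are nonnegative
  have hGu0 : 0 ≤ Gu := by
    have := cs u1 u2
    have hc : dotProduct u2 u1 = dotProduct u1 u2 := dotProduct_comm _ _
    rw [hGu_def, hc]; nlinarith [this]
  have hGv0 : 0 ≤ Gv := by
    have := cs v1 v2
    have hc : dotProduct v2 v1 = dotProduct v1 v2 := dotProduct_comm _ _
    rw [hGv_def, hc]; nlinarith [this]
  have hGa0 : 0 ≤ Ga := by
    have := cs a1 a2
    have hc : dotProduct a2 a1 = dotProduct a1 a2 := dotProduct_comm _ _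
    rw [hGa_def, hc]; nlinarith [this]
  have hGb0 : 0 ≤ Gb := by
    have := cs b1 b2
    have hc : dotProduct b2 b1 = dotProduct b1 b2 := dotProduct_comm _ _
    rw [hGb_def, hc]; nlinarith [this]
  -- Ga, Gb are positive
  have hx2 : 0 < Gu * Ga := h1 ▸ mul_pos hu_pos hu_pos
  have hy2 : 0 < Gv * Gb := h2 ▸ mul_pos hv_pos hv_pos
  have hGa : 0 < Ga := by
    rcases lt_or_eq_of_le hGa0 with h | h
    · exact h
    · exfalso; rw [← h] at hx2; simp at hx2
  have hGb : 0 < Gb := by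
    rcases lt_or_eq_of_le hGb0 with h | h
    · exact h
    · exfalso; rw [← h] at hy2; simp at hy2
  -- D ≠ 0
  have hD : det4 a1 a2 b1 b2 ≠ 0 := by
    set N : Matrix (Fin 4) (Fin 4) ℝ := Matrix.of fun i j => ![a1, a2, b1, b2] i j with hN
    have hli : LinearIndependent ℝ (fun i => N i) := hab
    have hunit : IsUnit N := Matrix.linearIndependent_rows_iff_isUnit.mp hli
    have hdet : N.det ≠ 0 := ((Matrix.isUnit_iff_isUnit_det N).mp hunit).ne_zero
    have : det4 a1 a2 b1 b2 = N.det := by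
      unfold det4
      rw [← Matrix.det_transpose N]
      rfl
    rw [this]; exact hdet
  have hDD : 0 < det4 a1 a2 b1 b2 * det4 a1 a2 b1 b2 := mul_self_pos.mpr hD
  -- conclude
  have key : (Ga * Gb) * (det4 u1 u2 v1 v2 * det4 a1 a2 b1 b2)
      = (det4 u1 u2 a1 a2 * det4 v1 v2 b1 b2)
        * (det4 a1 a2 b1 b2 * det4 a1 a2 b1 b2) := by
    rw [h5]
    calc (Ga * Gb) * (P * Q) = (Ga * P) * (Gb * Q) := by ring
      _ = (det4 u1 u2 a1 a2 * det4 a1 a2 b1 b2) * (det4 v1 v2 b1 b2 * det4 a1 a2 b1 b2) := by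
          rw [h3, h4]
      _ = _ := by ring
  nlinarith [key, mul_pos hGa hGb, mul_pos (mul_pos hu_pos hv_pos) hDD]
end

section
/- Let n ≥ 2 be an integer and let α ∈ ℂ be a nonzero root of f(u, ū) = uⁿ + u + ū, i.e. αⁿ + α + ᾱ = 0 and α ≠ 0. Then |n·αⁿ⁻¹ + 1| > 1. (Since ∂f/∂z(α,ᾱ) = n·αⁿ⁻¹ + 1 and ∂f/∂z̄(α,ᾱ) = 1, this says every nonzero root of uⁿ + u + ū = 0 is a positive simple root.) -/
/-- Every nonzero root `α` of `f(u, ū) = uⁿ + u + ū` (for `n ≥ 2`) satisfies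
`|n·αⁿ⁻¹ + 1| > 1`, i.e. it is a positive simple root
(`∂f/∂z(α,ᾱ) = n αⁿ⁻¹ + 1` has modulus bigger than `∂f/∂z̄(α,ᾱ) = 1`). -/
theorem nonzero_root_is_positive_simple (n : ℕ) (hn : 2 ≤ n) (α : ℂ)
    (hα : α ≠ 0) (hroot : α ^ n + α + (starRingEnd ℂ) α = 0) :
    1 < ‖(n : ℂ) * α ^ (n - 1) + 1‖ := by
  set a := α.re with ha_def
  have hconj : α + (starRingEnd ℂ) α = ((2*a : ℝ) : ℂ) := by
    push_cast [Complex.add_conj, ha_def]; rfl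
  have hpow : α ^ n = -(((2*a : ℝ) : ℂ)) := by
    have h := hroot
    rw [add_assoc, hconj] at h
    linear_combination h
  have ha : a ≠ 0 := by
    intro h
    apply hα
    have h0 : α ^ n = 0 := by rw [hpow, h]; norm_num
    exact (pow_eq_zero_iff (by omega)).mp h0
  have hαpow : (n:ℂ) * α ^ (n-1) + 1 = ((n:ℂ) * α ^ n + α) / α := by
    have hp : α ^ (n-1) * α = α ^ n := by
      rw [← pow_succ]; congr 1; omega
    field_simp
    linear_combination (n:ℂ) * hp
  rw [hαpow, norm_div]
  rw [lt_div_iff₀ (norm_pos_iff.mpr hα), one_mul]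
  have key : ‖α‖^2 < ‖(n:ℂ) * α ^ n + α‖^2 := by
    rw [Complex.sq_norm, Complex.sq_norm]
    have hre : ((n:ℂ) * α ^ n + α).re = a - 2*n*a := by
      rw [hpow]; simp [Complex.mul_re]; push_cast; ring
    have him : ((n:ℂ) * α ^ n + α).im = α.im := by
      rw [hpow]; simp [Complex.mul_im]
    rw [Complex.normSq_apply, Complex.normSq_apply, hre, him, ← ha_def]
    have ha2 : 0 < a^2 := by positivity
    have hn1 : (2:ℝ) ≤ n := by exact_mod_cast hn
    nlinarith [mul_pos ha2 (mul_pos (by linarith : (0:ℝ) < (n:ℝ)) (by linarith : (0:ℝ) < (n:ℝ)-1))]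
  exact lt_of_pow_lt_pow_left₀ 2 (norm_nonneg _) key
end

section
/- Let n ≥ 2 be an integer. The set of nonzero complex numbers α satisfying αⁿ + α + ᾱ = 0 is finite, and its cardinality β is: β = n − 1 if n is even; β = n + 1 if n ≡ 3 (mod 4); β = n − 1 if n ≡ 1 (mod 4). -/
open Real Finset

noncomputable def rr (n k : ℕ) : ℝ := (2 * |Real.cos (k * π / n)|) ^ (((n:ℝ) - 1)⁻¹)
noncomputable def gg (n k : ℕ) : ℂ :=
  (rr n k : ℂ) * Complex.exp ((k * π / n : ℝ) * Complex.I)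
def PP (n k : ℕ) : Prop := if k % 2 = 0 then (n < 2*k ∧ 2*k < 3*n) else (2*k < n ∨ 3*n < 2*k)

instance : ∀ n k, Decidable (PP n k) := fun n k => by unfold PP; infer_instance

def KK (n : ℕ) : Finset ℕ := (Finset.range (2*n)).filter (PP n)

lemma cos_sign_pos (n k : ℕ) (hn : 1 ≤ n) (hk : k < 2*n) (h : 2*k < n ∨ 3*n < 2*k) :
    0 < Real.cos (k * π / n) := by
  have hπ := Real.pi_pos
  have hn' : (0:ℝ) < n := by exact_mod_cast hn
  rcases h with h | h
  · have h' : (2*k:ℝ) < n := by exact_mod_cast h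
    apply Real.cos_pos_of_mem_Ioo
    constructor
    · have : (0:ℝ) ≤ k * π / n := by positivity
      nlinarith
    · rw [div_lt_div_iff₀ hn' two_pos]; nlinarith
  · have h1 : (3*n:ℝ) < 2*k := by exact_mod_cast h
    have h2 : (k:ℝ) < 2*n := by exact_mod_cast hk
    have hx1 : 3*π/2 < (k:ℝ)*π/n := by rw [div_lt_div_iff₀ two_pos hn']; nlinarith
    have hx2 : (k:ℝ)*π/n < 2*π := by rw [div_lt_iff₀ hn']; nlinarith
    rw [← Real.cos_sub_two_pi]
    apply Real.cos_pos_of_mem_Ioo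
    constructor <;> linarith

lemma cos_sign_neg (n k : ℕ) (hn : 1 ≤ n) (h1 : n < 2*k) (h2 : 2*k < 3*n) :
    Real.cos (k * π / n) < 0 := by
  have hπ := Real.pi_pos
  have hn' : (0:ℝ) < n := by exact_mod_cast hn
  have h1' : (n:ℝ) < 2*k := by exact_mod_cast h1
  have h2' : (2*k:ℝ) < 3*n := by exact_mod_cast h2
  have hx1 : π/2 < (k:ℝ)*π/n := by rw [div_lt_div_iff₀ two_pos hn']; nlinarith
  have hx2 : (k:ℝ)*π/n < 3*π/2 := by rw [div_lt_div_iff₀ hn' two_pos]; nlinarith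
  have hpos : 0 < Real.cos (k * π / n - π) := by
    apply Real.cos_pos_of_mem_Ioo; constructor <;> linarith
  have := Real.cos_sub_pi (k * π / n)
  linarith [this]

lemma cos_sign_zero (n k : ℕ) (hn : 1 ≤ n) (h : 2*k = n ∨ 2*k = 3*n) :
    Real.cos (k * π / n) = 0 := by
  have hn' : (0:ℝ) < n := by exact_mod_cast hn
  rcases h with h | h
  · have h' : (2*k:ℝ) = n := by exact_mod_cast h
    have : (k:ℝ) * π / n = π/2 := by field_simp; nlinarith [Real.pi_pos]
    rw [this, Real.cos_pi_div_two]
  · have h' : (2*k:ℝ) = 3*n := by exact_mod_cast h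
    have : (k:ℝ) * π / n = π + π/2 := by field_simp; nlinarith [Real.pi_pos]
    rw [this]
    simp [Real.cos_add]

lemma PP_iff (n k : ℕ) (hn : 1 ≤ n) (hk : k < 2*n) :
    PP n k ↔ (-1:ℝ)^k * Real.cos (k * π / n) < 0 := by
  rcases Nat.even_or_odd k with he | ho
  · rw [he.neg_one_pow, one_mul]
    have hk2 : k % 2 = 0 := Nat.even_iff.1 he
    constructor
    · intro hp
      rw [PP, if_pos hk2] at hp
      exact cos_sign_neg n k hn hp.1 hp.2
    · intro hc
      rw [PP, if_pos hk2]
      by_contra hcon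
      rcases (by omega : 2*k < n ∨ 3*n < 2*k ∨ 2*k = n ∨ 2*k = 3*n) with h | h | h | h
      · exact absurd hc (not_lt.2 (cos_sign_pos n k hn hk (Or.inl h)).le)
      · exact absurd hc (not_lt.2 (cos_sign_pos n k hn hk (Or.inr h)).le)
      · rw [cos_sign_zero n k hn (Or.inl h)] at hc; exact lt_irrefl _ hc
      · rw [cos_sign_zero n k hn (Or.inr h)] at hc; exact lt_irrefl _ hc
  · rw [ho.neg_one_pow, neg_mul, one_mul, neg_lt, neg_zero]
    have hk2 : ¬ (k % 2 = 0) := by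
      have := Nat.odd_iff.1 ho; omega
    constructor
    · intro hp
      rw [PP, if_neg hk2] at hp
      exact cos_sign_pos n k hn hk hp
    · intro hc
      rw [PP, if_neg hk2]
      by_contra hcon
      rcases (by omega : (n < 2*k ∧ 2*k < 3*n) ∨ 2*k = n ∨ 2*k = 3*n) with h | h | h
      · exact absurd hc (not_lt.2 (cos_sign_neg n k hn h.1 h.2).le)
      · rw [cos_sign_zero n k hn (Or.inl h)] at hc; exact lt_irrefl _ hc
      · rw [cos_sign_zero n k hn (Or.inr h)] at hc; exact lt_irrefl _ hc

lemma rr_nonneg (n k : ℕ) : 0 ≤ rr n k :=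
  Real.rpow_nonneg (by positivity) _

lemma rr_pos (n k : ℕ) (hc : Real.cos (k * π / n) ≠ 0) : 0 < rr n k := by
  apply Real.rpow_pos_of_pos
  have := abs_pos.2 hc
  linarith

lemma rr_pow (n k : ℕ) (hn : 2 ≤ n) :
    (rr n k) ^ (n - 1) = 2 * |Real.cos (k * π / n)| := by
  have hbase : (0:ℝ) ≤ 2 * |Real.cos (k * π / n)| := by positivity
  have hcast : ((n - 1 : ℕ) : ℝ) = (n:ℝ) - 1 := by
    push_cast [Nat.cast_sub (by omega : 1 ≤ n)]; ring
  have hne : ((n:ℝ) - 1) ≠ 0 := by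
    have : (2:ℝ) ≤ n := by exact_mod_cast hn
    linarith
  rw [rr, ← Real.rpow_natCast _ (n-1), ← Real.rpow_mul hbase, hcast,
    inv_mul_cancel₀ hne, Real.rpow_one]

lemma exp_theta_pow (n k : ℕ) (hn : 2 ≤ n) :
    (Complex.exp ((k * π / n : ℝ) * Complex.I)) ^ n = (-1 : ℂ)^k := by
  rw [← Complex.exp_nat_mul]
  have hn0 : (n:ℂ) ≠ 0 := by exact_mod_cast (by omega : n ≠ 0)
  have : (n:ℂ) * ((k * π / n : ℝ) * Complex.I) = (k:ℕ) * ((π:ℝ) * Complex.I) := by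
    push_cast; field_simp
  rw [this, Complex.exp_nat_mul, Complex.exp_pi_mul_I]

lemma gg_re (n k : ℕ) : (gg n k).re = rr n k * Real.cos (k * π / n) := by
  rw [gg, Complex.re_ofReal_mul, Complex.exp_ofReal_mul_I_re]

lemma gg_eq (n k : ℕ) (hn : 2 ≤ n) :
    (gg n k)^n + gg n k + (starRingEnd ℂ) (gg n k)
      = (((rr n k)^n * (-1:ℝ)^k + 2 * (rr n k) * Real.cos (k*π/n) : ℝ) : ℂ) := by
  have h1 : (gg n k)^n = ((rr n k : ℝ):ℂ)^n * (-1:ℂ)^k := by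
    rw [gg, mul_pow, exp_theta_pow n k hn]
  have h2 : gg n k + (starRingEnd ℂ) (gg n k) = ((2 * (gg n k).re : ℝ) : ℂ) := by
    rw [Complex.add_conj]
  rw [add_assoc, h1, h2, gg_re]
  push_cast; ring

lemma neg_sign_abs (n k : ℕ) (h : (-1:ℝ)^k * Real.cos (k * π / n) < 0) :
    (-1:ℝ)^k * (2 * |Real.cos (k * π / n)|) = -2 * Real.cos (k * π / n) := by
  rcases Nat.even_or_odd k with he | ho
  · rw [he.neg_one_pow] at h ⊢
    rw [one_mul] at h
    rw [abs_of_neg h]; ring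
  · rw [ho.neg_one_pow] at h ⊢
    have : 0 < Real.cos (k * π / n) := by nlinarith
    rw [abs_of_pos this]; ring

lemma gg_mem (n k : ℕ) (hn : 2 ≤ n) (hk : k ∈ KK n) :
    gg n k ≠ 0 ∧ (gg n k)^n + gg n k + (starRingEnd ℂ) (gg n k) = 0 := by
  rw [KK, Finset.mem_filter, Finset.mem_range] at hk
  have hsign : (-1:ℝ)^k * Real.cos (k * π / n) < 0 :=
    (PP_iff n k (by omega) hk.1).1 hk.2
  have hc : Real.cos (k * π / n) ≠ 0 := by
    intro h0; rw [h0, mul_zero] at hsign; exact lt_irrefl _ hsign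
  have hr := rr_pos n k hc
  constructor
  · rw [gg]
    exact mul_ne_zero (by exact_mod_cast hr.ne') (Complex.exp_ne_zero _)
  · rw [gg_eq n k hn]
    have key : (rr n k)^n * (-1:ℝ)^k + 2 * (rr n k) * Real.cos (k*π/n) = 0 := by
      have hpow : (rr n k)^n = (rr n k)^(n-1) * rr n k := by
        rw [← pow_succ]; congr 1; omega
      rw [hpow, rr_pow n k hn]
      have h3 := neg_sign_abs n k hsign
      linear_combination (rr n k) * h3
    rw [key, Complex.ofReal_zero]

lemma pow_inv_eq (n : ℕ) (hn : 2 ≤ n) (x : ℝ) (hx : 0 ≤ x) :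
    (x ^ (n-1)) ^ (((n:ℝ)-1)⁻¹) = x := by
  have hcast : ((n - 1 : ℕ) : ℝ) = (n:ℝ) - 1 := by
    push_cast [Nat.cast_sub (by omega : 1 ≤ n)]; ring
  have hne : ((n:ℝ) - 1) ≠ 0 := by
    have : (2:ℝ) ≤ n := by exact_mod_cast hn
    linarith
  rw [← Real.rpow_natCast x (n-1), ← Real.rpow_mul hx, hcast, mul_inv_cancel₀ hne,
    Real.rpow_one]

lemma neg_one_sq_pow (k : ℕ) : ((-1:ℝ)^k)^2 = 1 := by
  rw [← pow_mul, mul_comm, pow_mul, neg_one_sq, one_pow]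

lemma mem_exists (n : ℕ) (hn : 2 ≤ n) (α : ℂ) (h0 : α ≠ 0)
    (heq : α ^ n + α + (starRingEnd ℂ) α = 0) : ∃ k ∈ KK n, gg n k = α := by
  have hπ := Real.pi_pos
  have hnR : (0:ℝ) < n := by positivity
  set r := ‖α‖ with hrdef
  have hr : 0 < r := norm_pos_iff.mpr h0
  set θ := Complex.arg α with hθdef
  have hα : (r:ℂ) * Complex.exp (θ * Complex.I) = α := Complex.norm_mul_exp_arg_mul_I α
  -- α^n = -2 re α
  have heq' : α ^ n = -((2 * α.re : ℝ) : ℂ) := by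
    have h2 : α + (starRingEnd ℂ) α = ((2 * α.re : ℝ) : ℂ) := by
      rw [Complex.add_conj]
    linear_combination heq - h2
  -- sin (n θ) = 0
  have hαn : α ^ n = ((r ^ n : ℝ) : ℂ) * Complex.exp ((n * θ : ℝ) * Complex.I) := by
    rw [← hα, mul_pow, ← Complex.exp_nat_mul]
    push_cast
    ring_nf
  have hsin : Real.sin (n * θ) = 0 := by
    have him : (α ^ n).im = 0 := by rw [heq']; simp
    rw [hαn, Complex.im_ofReal_mul, Complex.exp_ofReal_mul_I_im] at him
    have : (0:ℝ) < r ^ n := pow_pos hr n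
    rcases mul_eq_zero.1 him with h | h
    · exact absurd h (by positivity)
    · exact h
  obtain ⟨m, hm⟩ := Real.sin_eq_zero_iff.1 hsin
  -- bounds on m
  have harg1 : -π < θ := Complex.neg_pi_lt_arg α
  have harg2 : θ ≤ π := Complex.arg_le_pi α
  have hm1 : -(n:ℤ) < m := by
    have : -(n:ℝ) * π < m * π := by rw [hm]; nlinarith
    have h2 : (-(n:ℝ)) < m := by
      have := (mul_lt_mul_iff_left₀ hπ).1 this
      exact this
    exact_mod_cast h2
  have hm2 : m ≤ (n:ℤ) := by
    have : (m:ℝ) * π ≤ n * π := by rw [hm]; nlinarith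
    have h2 : (m:ℝ) ≤ n := (mul_le_mul_iff_left₀ hπ).1 this
    exact_mod_cast h2
  -- define k
  set k : ℕ := (if 0 ≤ m then m else m + 2*n).toNat with hkdef
  have hkval : (k:ℤ) = (if 0 ≤ m then m else m + 2*n) := by
    rw [hkdef]; exact Int.toNat_of_nonneg (by split <;> omega)
  have hkm : ∃ j : ℤ, (j = 0 ∨ j = 1) ∧ (k : ℤ) = m + 2*n*j ∧ k < 2*n := by
    rcases le_or_gt 0 m with h | h
    · refine ⟨0, Or.inl rfl, by rw [hkval, if_pos h]; ring, ?_⟩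
      have h2 : (k:ℤ) < 2*(n:ℤ) := by rw [hkval, if_pos h]; omega
      exact_mod_cast h2
    · refine ⟨1, Or.inr rfl, by rw [hkval, if_neg (not_le.2 h)]; ring, ?_⟩
      have h2 : (k:ℤ) < 2*(n:ℤ) := by rw [hkval, if_neg (not_le.2 h)]; omega
      exact_mod_cast h2
  obtain ⟨j, hj01, hkj, hk2n⟩ := hkm
  -- θ relation:  k π / n = θ + 2 π j
  have hθk : (k:ℝ) * π / n = θ + 2*π*j := by
    have hmθ : (m:ℝ) * π = n * θ := hm
    have hkR : (k:ℝ) = (m:ℝ) + 2*n*j := by exact_mod_cast hkj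
    rw [hkR]
    field_simp
    nlinarith [hmθ]
  have hexp : Complex.exp (((k:ℝ) * π / n : ℝ) * Complex.I) = Complex.exp (θ * Complex.I) := by
    have harg : (((k:ℝ) * π / n : ℝ) : ℂ) * Complex.I
        = (θ:ℝ) * Complex.I + j * (2*π*Complex.I) := by
      rw [hθk]; push_cast; ring
    rw [harg, Complex.exp_add, Complex.exp_int_mul_two_pi_mul_I, mul_one]
  have hαform : ((r:ℝ):ℂ) * Complex.exp (((k:ℝ) * π / n : ℝ) * Complex.I) = α := by
    rw [hexp, hα]
  -- real equation
  have hre : α.re = r * Real.cos ((k:ℝ) * π / n) := by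
    rw [← hαform, Complex.re_ofReal_mul, Complex.exp_ofReal_mul_I_re]
  have hcmplx : ((r^n * (-1:ℝ)^k + 2 * r * Real.cos ((k:ℝ)*π/n) : ℝ) : ℂ) = 0 := by
    have hpow : α ^ n = ((r:ℝ):ℂ)^n * (-1:ℂ)^k := by
      rw [← hαform, mul_pow]
      congr 1
      have := exp_theta_pow n k hn
      exact_mod_cast this
    rw [heq', hre] at hpow
    push_cast at hpow ⊢
    linear_combination -hpow
  have hreal : r^n * (-1:ℝ)^k + 2 * r * Real.cos ((k:ℝ)*π/n) = 0 := by
    exact_mod_cast hcmplx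
  set c := Real.cos ((k:ℝ) * π / n) with hcdef
  have hsq := neg_one_sq_pow k
  have h2 : r^n + 2*r*((-1:ℝ)^k * c) = 0 := by
    linear_combination ((-1:ℝ)^k) * hreal - r^n * hsq
  have hsign : (-1:ℝ)^k * c < 0 := by
    nlinarith [pow_pos hr n, hr]
  have hc : c ≠ 0 := by
    intro h; rw [h, mul_zero] at hsign; exact lt_irrefl _ hsign
  have habs : 2*|c| = -2*((-1:ℝ)^k)*c := by
    have nab := neg_sign_abs n k (by rw [← hcdef]; exact hsign)
    rw [← hcdef] at nab
    linear_combination ((-1:ℝ)^k) * nab - 2*|c| * hsq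
  have hrpow : r ^ (n-1) = 2*|c| := by
    have hps : r ^ n = r ^ (n-1) * r := by rw [← pow_succ]; congr 1; omega
    rw [hps] at h2
    have : r ^ (n-1) * r = (2*|c|) * r := by
      rw [habs]; linear_combination h2
    exact mul_right_cancel₀ hr.ne' this
  have hrr : rr n k = r := by
    rw [rr, ← hcdef, ← hrpow, pow_inv_eq n hn r hr.le]
  refine ⟨k, ?_, ?_⟩
  · rw [KK, Finset.mem_filter, Finset.mem_range]
    refine ⟨by exact_mod_cast hk2n, ?_⟩
    rw [PP_iff n k (by omega) (by exact_mod_cast hk2n)]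
    rw [← hcdef]
    exact hsign
  · rw [gg, hrr]
    exact_mod_cast hαform

lemma gg_injOn (n : ℕ) (hn : 2 ≤ n) : Set.InjOn (gg n) ↑(KK n) := by
  have hπ := Real.pi_pos
  have hnR : (0:ℝ) < n := by positivity
  intro k hk k' hk' he
  simp only [Finset.coe_filter, Set.mem_setOf_eq, KK, Finset.mem_coe, Finset.mem_filter,
    Finset.mem_range] at hk hk'
  have hck : Real.cos (k * π / n) ≠ 0 := by
    have := (PP_iff n k (by omega) hk.1).1 hk.2
    intro h; rw [h, mul_zero] at this; exact lt_irrefl _ this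
  have hck' : Real.cos (k' * π / n) ≠ 0 := by
    have := (PP_iff n k' (by omega) hk'.1).1 hk'.2
    intro h; rw [h, mul_zero] at this; exact lt_irrefl _ this
  have habs : rr n k = rr n k' := by
    have h1 := congrArg (fun z : ℂ => ‖z‖) he
    rw [gg, gg, norm_mul, norm_mul, Complex.norm_exp_ofReal_mul_I,
      Complex.norm_exp_ofReal_mul_I, mul_one, mul_one, Complex.norm_real,
      Complex.norm_real, Real.norm_eq_abs, Real.norm_eq_abs, abs_of_pos (rr_pos n k hck), abs_of_pos (rr_pos n k' hck')] at h1
    exact h1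
  have hexp : Complex.exp (((k:ℝ) * π / n : ℝ) * Complex.I)
      = Complex.exp (((k':ℝ) * π / n : ℝ) * Complex.I) := by
    rw [gg, gg, habs] at he
    exact mul_left_cancel₀ (by exact_mod_cast (rr_pos n k' hck').ne') he
  obtain ⟨m, hm⟩ := Complex.exp_eq_exp_iff_exists_int.1 hexp
  have him := congrArg Complex.im hm
  simp only [Complex.mul_I_im, Complex.add_im, Complex.ofReal_re] at him
  have himr : (k:ℝ) * π / n = (k':ℝ) * π / n + 2 * π * m := by
    have : ((((k:ℝ) * π / n : ℝ)) : ℂ).im = 0 := Complex.ofReal_im _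
    push_cast at him
    convert him using 1 <;> simp [Complex.add_im, Complex.mul_im] <;> ring
  have hkk' : (k:ℝ) * π = ((k':ℝ) + 2 * n * m) * π := by
    have h2 : (k:ℝ) * π = ((k':ℝ) * π / n + 2 * π * m) * n := by
      rw [← himr]; field_simp
    rw [h2]; field_simp
  have h3 : (k:ℝ) = (k':ℝ) + 2 * n * m := mul_right_cancel₀ hπ.ne' hkk'
  have h4 : (k:ℤ) = (k':ℤ) + 2 * n * m := by exact_mod_cast h3
  have hkn := hk.1; have hkn' := hk'.1
  have hdvd : (2*(n:ℤ)) ∣ ((k:ℤ) - k') := ⟨m, by linarith⟩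
  have habs2 : |(k:ℤ) - k'| < 2*(n:ℤ) := by rw [abs_lt]; omega
  have := Int.eq_zero_of_abs_lt_dvd hdvd habs2
  omega

lemma set_eq (n : ℕ) (hn : 2 ≤ n) :
    {α : ℂ | α ≠ 0 ∧ α ^ n + α + (starRingEnd ℂ) α = 0} = gg n '' ↑(KK n) := by
  ext α
  constructor
  · rintro ⟨h0, heq⟩
    obtain ⟨k, hk, hgk⟩ := mem_exists n hn α h0 heq
    exact ⟨k, hk, hgk⟩
  · rintro ⟨k, hk, rfl⟩
    exact gg_mem n k hn hk

lemma set_finite (n : ℕ) (hn : 2 ≤ n) :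
    ({α : ℂ | α ≠ 0 ∧ α ^ n + α + (starRingEnd ℂ) α = 0}).Finite := by
  rw [set_eq n hn]
  exact Set.Finite.image _ (Set.finite_coe_iff.mp (by infer_instance))

lemma set_ncard (n : ℕ) (hn : 2 ≤ n) :
    ({α : ℂ | α ≠ 0 ∧ α ^ n + α + (starRingEnd ℂ) α = 0}).ncard = (KK n).card := by
  rw [set_eq n hn, Set.ncard_image_of_injOn (gg_injOn n hn), Set.ncard_coe_finset]

-- counting
lemma card_odd_range (N : ℕ) :
    ((Finset.range N).filter (fun k => k % 2 = 1)).card = N / 2 := by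
  induction N with
  | zero => simp
  | succ n ih =>
    rw [Finset.range_add_one, Finset.filter_insert]
    by_cases h : n % 2 = 1
    · rw [if_pos h, Finset.card_insert_of_notMem (by simp), ih]; omega
    · rw [if_neg h, ih]; omega

lemma card_even_range (N : ℕ) :
    ((Finset.range N).filter (fun k => k % 2 = 0)).card = (N+1) / 2 := by
  induction N with
  | zero => simp
  | succ n ih =>
    rw [Finset.range_add_one, Finset.filter_insert]
    by_cases h : n % 2 = 0
    · rw [if_pos h, Finset.card_insert_of_notMem (by simp), ih]; omega
    · rw [if_neg h, ih]; omega

lemma card_parity_Ico (a b : ℕ) (hab : a ≤ b) (p : ℕ) :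
    ((Finset.Ico a b).filter (fun k => k % 2 = p)).card
      = ((Finset.range b).filter (fun k => k % 2 = p)).card
        - ((Finset.range a).filter (fun k => k % 2 = p)).card := by
  have hsplit : Finset.range b = Finset.range a ∪ Finset.Ico a b := by
    rw [Finset.range_eq_Ico, Finset.range_eq_Ico, Finset.Ico_union_Ico_eq_Ico (Nat.zero_le a) hab]
  have hdisj : Disjoint (Finset.range a) (Finset.Ico a b) := by
    rw [Finset.range_eq_Ico]; exact Finset.Ico_disjoint_Ico_consecutive 0 a b
  rw [hsplit, Finset.filter_union,
    Finset.card_union_of_disjoint (Finset.disjoint_filter_filter hdisj)]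
  omega

lemma card_odd_Ico (a b : ℕ) (hab : a ≤ b) :
    ((Finset.Ico a b).filter (fun k => k % 2 = 1)).card = b / 2 - a / 2 := by
  rw [card_parity_Ico a b hab 1, card_odd_range, card_odd_range]

lemma card_even_Ico (a b : ℕ) (hab : a ≤ b) :
    ((Finset.Ico a b).filter (fun k => k % 2 = 0)).card = (b+1) / 2 - (a+1) / 2 := by
  rw [card_parity_Ico a b hab 0, card_even_range, card_even_range]

lemma KK_card (n : ℕ) (hn : 2 ≤ n) :
    (KK n).card = ((n+1)/2)/2
      + ((((3*n+1)/2)+1)/2 - ((n/2+1)+1)/2)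
      + ((2*n)/2 - ((3*n)/2+1)/2) := by
  classical
  set A := (Finset.Ico 0 ((n+1)/2)).filter (fun k => k % 2 = 1) with hA
  set B := (Finset.Ico (n/2+1) ((3*n+1)/2)).filter (fun k => k % 2 = 0) with hB
  set C := (Finset.Ico ((3*n)/2+1) (2*n)).filter (fun k => k % 2 = 1) with hC
  have hKK : KK n = A ∪ B ∪ C := by
    ext k
    simp only [KK, PP, hA, hB, hC, Finset.mem_filter, Finset.mem_range, Finset.mem_union,
      Finset.mem_Ico]
    by_cases h : k % 2 = 0
    · rw [if_pos h]; constructor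
      · rintro ⟨h1, h2, h3⟩; exact Or.inl (Or.inr ⟨⟨by omega, by omega⟩, h⟩)
      · rintro ((⟨⟨h1, h2⟩, h3⟩ | ⟨⟨h1, h2⟩, h3⟩) | ⟨⟨h1, h2⟩, h3⟩) <;> omega
    · rw [if_neg h]; constructor
      · rintro ⟨h1, (h2 | h2)⟩
        · exact Or.inl (Or.inl ⟨⟨by omega, by omega⟩, by omega⟩)
        · exact Or.inr ⟨⟨by omega, by omega⟩, by omega⟩
      · rintro ((⟨⟨h1, h2⟩, h3⟩ | ⟨⟨h1, h2⟩, h3⟩) | ⟨⟨h1, h2⟩, h3⟩) <;> omega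
  have hdAB : Disjoint A B := by
    rw [Finset.disjoint_left]; intro a ha hb
    simp only [hA, hB, Finset.mem_filter, Finset.mem_Ico] at ha hb
    omega
  have hdAC : Disjoint A C := by
    rw [Finset.disjoint_left]; intro a ha hb
    simp only [hA, hC, Finset.mem_filter, Finset.mem_Ico] at ha hb
    omega
  have hdBC : Disjoint B C := by
    rw [Finset.disjoint_left]; intro a ha hb
    simp only [hB, hC, Finset.mem_filter, Finset.mem_Ico] at ha hb
    omega
  rw [hKK, Finset.card_union_of_disjoint (by
      refine Finset.disjoint_union_left.2 ⟨hdAC, hdBC⟩),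
    Finset.card_union_of_disjoint hdAB]
  rw [hA, hB, hC, card_odd_Ico 0 ((n+1)/2) (by omega),
    card_even_Ico (n/2+1) ((3*n+1)/2) (by omega),
    card_odd_Ico ((3*n)/2+1) (2*n) (by omega)]
  omega

/-- The number β of nonzero mixed roots of `uⁿ + u + ū = 0` (for `n ≥ 2`):
the root set is finite, and `β = n − 1` if `n` is even, `β = n + 1` if
`n ≡ 3 (mod 4)`, and `β = n − 1` if `n ≡ 1 (mod 4)`. -/
theorem card_nonzero_roots (n : ℕ) (hn : 2 ≤ n) :
    ({α : ℂ | α ≠ 0 ∧ α ^ n + α + (starRingEnd ℂ) α = 0}).Finite ∧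
    (Even n →
      ({α : ℂ | α ≠ 0 ∧ α ^ n + α + (starRingEnd ℂ) α = 0}).ncard = n - 1) ∧
    (n % 4 = 3 →
      ({α : ℂ | α ≠ 0 ∧ α ^ n + α + (starRingEnd ℂ) α = 0}).ncard = n + 1) ∧
    (n % 4 = 1 →
      ({α : ℂ | α ≠ 0 ∧ α ^ n + α + (starRingEnd ℂ) α = 0}).ncard = n - 1) := by
  obtain ⟨j, hj⟩ : ∃ j, n = 4*j ∨ n = 4*j+1 ∨ n = 4*j+2 ∨ n = 4*j+3 := ⟨n/4, by omega⟩
  refine ⟨set_finite n hn, ?_, ?_, ?_⟩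
  · intro h
    have h2 : n % 2 = 0 := Nat.even_iff.1 h
    rw [set_ncard n hn, KK_card n hn]
    rcases hj with rfl | rfl | rfl | rfl <;> omega
  · intro h
    rw [set_ncard n hn, KK_card n hn]
    rcases hj with rfl | rfl | rfl | rfl <;> omega
  · intro h
    rw [set_ncard n hn, KK_card n hn]
    rcases hj with rfl | rfl | rfl | rfl <;> omega
end

section
/- Let F : ℂ × ℂ → ℂ be the mixed function F(u₀, u₁) = u₁·ū₀ − u₀ (the local equation of the twisted line at infinity). For every point p = (u₀, u₁) with F(p) = 0, the real Fréchet derivative of F at p (an ℝ-linear map ℂ² → ℂ) fails to be surjective if and only if u₀ = 0 and |u₁| = 1. Hence the mixed singular locus of the curve {F = 0} is exactly the circle {(0, u₁) | |u₁| = 1}. -/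
open ContinuousLinearMap

noncomputable def conjL : ℂ →L[ℝ] ℂ := (Complex.conjCLE : ℂ ≃L[ℝ] ℂ).toContinuousLinearMap

noncomputable def Lder (a b : ℂ) : ℂ × ℂ →L[ℝ] ℂ :=
  b • (conjL.comp (fst ℝ ℂ ℂ)) + ((starRingEnd ℂ) a) • (snd ℝ ℂ ℂ) - fst ℝ ℂ ℂ

lemma Lder_apply (a b : ℂ) (v : ℂ × ℂ) :
    Lder a b v = b * (starRingEnd ℂ) v.1 + (starRingEnd ℂ) a * v.2 - v.1 := by
  simp [Lder, conjL, smul_eq_mul]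

lemma hasFDeriv (a b : ℂ) :
    HasFDerivAt (fun p : ℂ × ℂ => p.2 * (starRingEnd ℂ) p.1 - p.1) (Lder a b) (a, b) := by
  have h1 : HasFDerivAt (fun p : ℂ × ℂ => (starRingEnd ℂ) p.1)
      (conjL.comp (fst ℝ ℂ ℂ)) (a, b) := (conjL.comp (fst ℝ ℂ ℂ)).hasFDerivAt
  have h2 : HasFDerivAt (fun p : ℂ × ℂ => p.2) (snd ℝ ℂ ℂ) (a, b) :=
    (snd ℝ ℂ ℂ).hasFDerivAt
  have h3 : HasFDerivAt (fun p : ℂ × ℂ => p.1) (fst ℝ ℂ ℂ) (a, b) :=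
    (fst ℝ ℂ ℂ).hasFDerivAt
  have := (h2.mul h1).sub h3
  exact this

/-- Twisted line: for the mixed function `F(u₀,u₁) = u₁ū₀ − u₀` and any point `p`
of the curve `{F = 0}`, the real Fréchet derivative of `F` at `p` (an ℝ-linear map
`ℂ² → ℂ`) fails to be surjective exactly when `u₀ = 0` and `|u₁| = 1`.  Hence the
mixed singular locus of `{F = 0}` is the circle `{(0,u₁) | |u₁| = 1}` at infinity. -/
theorem twisted_line_singular_locus
    (F : ℂ × ℂ → ℂ) (hF : F = fun p => p.2 * (starRingEnd ℂ) p.1 - p.1) :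
    ∀ p : ℂ × ℂ, F p = 0 →
      (¬ Function.Surjective (fderiv ℝ F p) ↔ (p.1 = 0 ∧ ‖p.2‖ = 1)) := by
  subst hF
  rintro ⟨a, b⟩ hp
  have hder := (hasFDeriv a b).fderiv
  rw [hder]
  constructor
  · -- ¬surj → a = 0 ∧ |b| = 1
    intro hns
    by_contra hcon
    apply hns
    by_cases ha : a = 0
    · -- then |b| ≠ 1
      have hb : ‖b‖ ≠ 1 := fun h => hcon ⟨ha, h⟩
      subst ha
      intro w
      set t : ℂ := 1 - b * (starRingEnd ℂ) b with ht
      have htne : t ≠ 0 := by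
        intro h0
        apply hb
        have : b * (starRingEnd ℂ) b = 1 := by
          have := sub_eq_zero.mp h0
          linear_combination -this
        rw [Complex.mul_conj] at this
        have h2 : Complex.normSq b = 1 := by exact_mod_cast this
        have := Complex.normSq_eq_norm_sq b
        nlinarith [norm_nonneg b]
      refine ⟨(-(w + b * (starRingEnd ℂ) w) / t, 0), ?_⟩
      rw [Lder_apply]
      simp only [map_zero, zero_mul, mul_zero, add_zero, zero_add, sub_zero]
      rw [map_div₀, map_neg, map_add, map_mul]
      have hct : (starRingEnd ℂ) t = t := by
        simp [ht, map_mul, Complex.conj_conj]; ring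
      rw [hct]
      field_simp
      rw [Complex.conj_conj, ht]
      ring
    · -- a ≠ 0: surjective
      intro w
      refine ⟨(0, w / (starRingEnd ℂ) a), ?_⟩
      rw [Lder_apply]
      have : (starRingEnd ℂ) a ≠ 0 := by simpa using ha
      field_simp
      simp
  · rintro ⟨ha, hb⟩ hsurj
    subst ha
    have hbb : b * (starRingEnd ℂ) b = 1 := by
      rw [Complex.mul_conj]
      rw [show Complex.normSq b = 1 by rw [← Complex.sq_norm, hb]; norm_num]
      norm_num
    -- every w in range satisfies conj b * w + conj w = 0
    have key : ∀ w : ℂ, (starRingEnd ℂ) b * w + (starRingEnd ℂ) w = 0 := by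
      intro w
      obtain ⟨⟨h, k⟩, hv⟩ := hsurj w
      rw [Lder_apply] at hv
      simp only [map_zero, zero_mul, add_zero, zero_add, sub_zero] at hv
      rw [← hv]
      simp only [map_sub, map_mul, Complex.conj_conj]
      have : (starRingEnd ℂ) b * b = 1 := by linear_combination hbb
      linear_combination ((starRingEnd ℂ) h) * this
    have k1 := key (b + 1)
    have k2 := key Complex.I
    simp only [map_add, map_one, Complex.conj_I] at k1 k2
    have hb1 : (starRingEnd ℂ) b = -1 := by linear_combination k1 / 2 - hbb / 2
    rw [hb1] at k2
    simp at k2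
end

section
/- Let c ∈ ℂ, c ≠ 0, p, q ∈ ℕ, and γ₁, …, γ_s ∈ ℂ nonzero with |γⱼ| ≠ 1 and multiplicities νⱼ ∈ ℕ; define g(u) = c·u^p·ū^q·∏ⱼ(u + γⱼ·ū)^{νⱼ} and d = p + q + Σⱼ νⱼ, and assume d ≥ 1. Let k : ℂ → ℂ be any function for which there exists C ≥ 0 with |k(u)| ≤ C·|u|^{d−1} for all u with |u| ≥ 1. Then there exists R > 0 such that g(u) + k(u) ≠ 0 whenever |u| ≥ R. (In particular, an admissible-at-infinity mixed polynomial f = f_{d̄} + k, where f_{d̄} is its admissible top radially homogeneous part and k collects the lower-degree terms, has all of its zeros contained in a bounded disk.) -/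
/-- An admissible-at-infinity mixed polynomial has all its zeros in a bounded disk:
if `g(u) = c·u^p·ū^q·∏ⱼ(u + γⱼū)^{νⱼ}` with `c ≠ 0`, all `γⱼ ≠ 0`, `|γⱼ| ≠ 1`,
`d = p + q + Σⱼ νⱼ ≥ 1`, and `k : ℂ → ℂ` satisfies `|k(u)| ≤ C·|u|^{d−1}` for some
`C ≥ 0` and all `|u| ≥ 1`, then there is `R > 0` such that `g(u) + k(u) ≠ 0`
whenever `|u| ≥ R`. -/
theorem admissible_at_infinity_no_large_roots
    (c : ℂ) (hc : c ≠ 0) (p q s : ℕ) (γ : Fin s → ℂ) (ν : Fin s → ℕ)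
    (hγ0 : ∀ j, γ j ≠ 0) (hγ1 : ∀ j, ‖γ j‖ ≠ 1)
    (g : ℂ → ℂ)
    (hg : g = fun u => c * u ^ p * ((starRingEnd ℂ) u) ^ q *
      ∏ j, (u + γ j * (starRingEnd ℂ) u) ^ ν j)
    (d : ℕ) (hd : d = p + q + ∑ j, ν j) (hd1 : 1 ≤ d)
    (k : ℂ → ℂ) (C : ℝ) (hC : 0 ≤ C)
    (hk : ∀ u : ℂ, 1 ≤ ‖u‖ →
      ‖k u‖ ≤ C * ‖u‖ ^ (d - 1)) :
    ∃ R > 0, ∀ u : ℂ, R ≤ ‖u‖ → g u + k u ≠ 0 := by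
  set ε : ℝ := ‖c‖ * ∏ j, |1 - ‖γ j‖| ^ ν j with hεdef
  have hεpos : 0 < ε := by
    apply mul_pos (by simpa using hc)
    apply Finset.prod_pos
    intro j _
    apply pow_pos
    rw [abs_pos, sub_ne_zero]
    exact fun h => hγ1 j h.symm
  refine ⟨max 1 ((C + ε) / ε), lt_of_lt_of_le one_pos (le_max_left _ _), ?_⟩
  intro u hu h0
  have hu1 : (1 : ℝ) ≤ ‖u‖ := le_trans (le_max_left _ _) hu
  have huC : (C + ε) / ε ≤ ‖u‖ := le_trans (le_max_right _ _) hu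
  have huε : C + ε ≤ ε * ‖u‖ := by
    rw [div_le_iff₀ hεpos] at huC; linarith [huC]
  -- lower bound on |g u|
  have hlow : ε * ‖u‖ ^ d ≤ ‖g u‖ := by
    rw [hg]
    simp only [norm_mul, norm_pow, norm_prod, Complex.norm_conj]
    have hfac : ∀ j : Fin s, |1 - ‖γ j‖| * ‖u‖ ≤
        ‖u + γ j * (starRingEnd ℂ) u‖ := by
      intro j
      have := abs_norm_sub_norm_le u (-(γ j * (starRingEnd ℂ) u))
      simp only [sub_neg_eq_add, norm_neg, norm_mul,
        Complex.norm_conj] at this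
      calc |1 - ‖γ j‖| * ‖u‖
          = |‖u‖ - ‖γ j‖ * ‖u‖| := by
            rw [← abs_of_nonneg (norm_nonneg u) (a := ‖u‖), ← abs_mul,
              abs_of_nonneg (norm_nonneg u)]
            ring_nf
        _ ≤ _ := this
    calc ε * ‖u‖ ^ d
        = ‖c‖ * ‖u‖ ^ p * ‖u‖ ^ q *
          ∏ j, (|1 - ‖γ j‖| * ‖u‖) ^ ν j := by
          rw [hεdef, hd]
          simp only [mul_pow, Finset.prod_mul_distrib, Finset.prod_pow_eq_pow_sum]
          ring
      _ ≤ ‖c‖ * ‖u‖ ^ p * ‖u‖ ^ q *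
          ∏ j, ‖u + γ j * (starRingEnd ℂ) u‖ ^ ν j := by
          apply mul_le_mul_of_nonneg_left
          · apply Finset.prod_le_prod
            · intro j _; positivity
            · intro j _
              exact pow_le_pow_left₀ (by positivity) (hfac j) _
          · positivity
  -- upper bound via k
  have heq : ‖g u‖ = ‖k u‖ := by
    have : g u = -k u := by linear_combination h0
    rw [this, norm_neg]
  have hup : ‖g u‖ ≤ C * ‖u‖ ^ (d - 1) :=
    heq ▸ hk u hu1
  have hpow : ‖u‖ ^ d = ‖u‖ ^ (d - 1) * ‖u‖ := by
    rw [← pow_succ, Nat.sub_add_cancel hd1]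
  have hposp : (0 : ℝ) < ‖u‖ ^ (d - 1) := by positivity
  have : ε * ‖u‖ ≤ C := by
    have h1 : ε * ‖u‖ * ‖u‖ ^ (d - 1) ≤
        C * ‖u‖ ^ (d - 1) := by
      calc ε * ‖u‖ * ‖u‖ ^ (d - 1)
          = ε * ‖u‖ ^ d := by rw [hpow]; ring
        _ ≤ ‖g u‖ := hlow
        _ ≤ C * ‖u‖ ^ (d - 1) := hup
    exact le_of_mul_le_mul_right h1 hposp
  linarith
end

section
/- Let c ∈ ℂ, c ≠ 0, a, b ∈ ℕ, and δ₁, …, δ_{s'} ∈ ℂ nonzero with |δⱼ| ≠ 1 and multiplicities μⱼ ∈ ℕ; define g(u) = c·u^a·ū^b·∏ⱼ(u + δⱼ·ū)^{μⱼ} and d = a + b + Σⱼ μⱼ. Let j : ℂ → ℂ be any function for which there exists C ≥ 0 with |j(u)| ≤ C·|u|^{d+1} for all u with |u| ≤ 1. Then there exists r > 0 such that g(u) + j(u) ≠ 0 whenever 0 < |u| ≤ r. (In particular, for a mixed polynomial f = f_{d̲} + j that is admissible at the origin, with f_{d̲} its lowest-degree radially homogeneous part and j the higher-degree terms, the origin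 is an isolated root of f.) -/
/-- An admissible-at-the-origin mixed polynomial has the origin as an isolated root:
if `g(u) = c·u^a·ū^b·∏ⱼ(u + δⱼū)^{μⱼ}` with `c ≠ 0`, all `δⱼ ≠ 0`, `|δⱼ| ≠ 1`,
`d = a + b + Σⱼ μⱼ`, and `j : ℂ → ℂ` satisfies `|j(u)| ≤ C·|u|^{d+1}` for some
`C ≥ 0` and all `|u| ≤ 1`, then there is `r > 0` such that `g(u) + j(u) ≠ 0`
whenever `0 < |u| ≤ r`. -/
theorem admissible_at_origin_isolated_root
    (c : ℂ) (hc : c ≠ 0) (a b s' : ℕ) (δ : Fin s' → ℂ) (μ : Fin s' → ℕ)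
    (hδ0 : ∀ i, δ i ≠ 0) (hδ1 : ∀ i, ‖δ i‖ ≠ 1)
    (g : ℂ → ℂ)
    (hg : g = fun u => c * u ^ a * ((starRingEnd ℂ) u) ^ b *
      ∏ i, (u + δ i * (starRingEnd ℂ) u) ^ μ i)
    (d : ℕ) (hd : d = a + b + ∑ i, μ i)
    (j : ℂ → ℂ) (C : ℝ) (hC : 0 ≤ C)
    (hj : ∀ u : ℂ, ‖u‖ ≤ 1 →
      ‖j u‖ ≤ C * ‖u‖ ^ (d + 1)) :
    ∃ r > 0, ∀ u : ℂ, u ≠ 0 → ‖u‖ ≤ r → g u + j u ≠ 0 := by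
  set K : ℝ := ‖c‖ * ∏ i, |1 - ‖δ i‖| ^ μ i with hK
  have hKpos : 0 < K := by
    apply mul_pos (norm_pos_iff.mpr hc)
    apply Finset.prod_pos
    intro i _
    apply pow_pos
    rw [abs_pos, sub_ne_zero]
    exact fun h => hδ1 i h.symm
  -- key lower bound
  have key : ∀ u : ℂ, K * ‖u‖ ^ d ≤ ‖g u‖ := by
    intro u
    have hfac : ∀ i : Fin s', |1 - ‖δ i‖| * ‖u‖ ≤
        ‖u + δ i * (starRingEnd ℂ) u‖ := by
      intro i
      have h1 : |‖u‖ - ‖δ i * (starRingEnd ℂ) u‖| ≤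
          ‖u + δ i * (starRingEnd ℂ) u‖ := by
        have := abs_norm_sub_norm_le u (-(δ i * (starRingEnd ℂ) u))
        simpa [sub_neg_eq_add] using this
      calc |1 - ‖δ i‖| * ‖u‖
          = |‖u‖ - ‖δ i‖ * ‖u‖| := by
            rw [show ‖u‖ - ‖δ i‖ * ‖u‖
                = (1 - ‖δ i‖) * ‖u‖ from by ring,
              abs_mul, abs_of_nonneg (norm_nonneg u)]
        _ = |‖u‖ - ‖δ i * (starRingEnd ℂ) u‖| := by
            rw [norm_mul, Complex.norm_conj]
        _ ≤ _ := h1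
    rw [hg]
    simp only [norm_mul, norm_pow, norm_prod, Complex.norm_conj]
    rw [hd, pow_add, pow_add]
    have hprod : (∏ i, |1 - ‖δ i‖| ^ μ i) * ‖u‖ ^ (∑ i, μ i) ≤
        ∏ i, ‖u + δ i * (starRingEnd ℂ) u‖ ^ μ i := by
      rw [← Finset.prod_pow_eq_pow_sum, ← Finset.prod_mul_distrib]
      apply Finset.prod_le_prod
      · intro i _; positivity
      · intro i _
        rw [← mul_pow]
        exact pow_le_pow_left₀ (by positivity) (hfac i) (μ i)
    calc K * (‖u‖ ^ a * ‖u‖ ^ b * ‖u‖ ^ (∑ i, μ i))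
        = ‖c‖ * ‖u‖ ^ a * ‖u‖ ^ b *
          ((∏ i, |1 - ‖δ i‖| ^ μ i) * ‖u‖ ^ (∑ i, μ i)) := by
          rw [hK]; ring
      _ ≤ ‖c‖ * ‖u‖ ^ a * ‖u‖ ^ b *
          ∏ i, ‖u + δ i * (starRingEnd ℂ) u‖ ^ μ i := by
          apply mul_le_mul_of_nonneg_left hprod
          positivity
  refine ⟨min 1 (K / (C + K)), lt_min one_pos (by positivity), ?_⟩
  intro u hu0 hur heq
  have hu1 : ‖u‖ ≤ 1 := hur.trans (min_le_left _ _)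
  have huK : ‖u‖ ≤ K / (C + K) := hur.trans (min_le_right _ _)
  have hupos : 0 < ‖u‖ := norm_pos_iff.mpr hu0
  -- j u = - g u
  have hjg : ‖g u‖ = ‖j u‖ := by
    have : g u = - j u := by linear_combination heq
    rw [this, norm_neg]
  have h1 : K * ‖u‖ ^ d ≤ C * ‖u‖ ^ (d + 1) :=
    (key u).trans (hjg.le.trans (hj u hu1))
  have h2 : C * ‖u‖ ^ (d + 1) < K * ‖u‖ ^ d := by
    rw [pow_succ]
    have hCu : C * ‖u‖ < K := by
      calc C * ‖u‖ ≤ C * (K / (C + K)) :=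
            mul_le_mul_of_nonneg_left huK hC
        _ < K := by
            rw [← mul_div_assoc, div_lt_iff₀ (by positivity)]
            nlinarith
    calc C * (‖u‖ ^ d * ‖u‖)
        = (C * ‖u‖) * ‖u‖ ^ d := by ring
      _ < K * ‖u‖ ^ d := by
          apply mul_lt_mul_of_pos_right hCu (by positivity)
  linarith
end
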